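/- Let N ≥ 7 be an integer, p := (N+2)/(N-2), α_N := (N(N-2))^{(N-2)/4}, and for δ > 0 let U_δ : ℝ^N → ℝ be U_δ(x) := α_N · δ^{(N-2)/2} / (δ² + |x|²)^{(N-2)/2}. Fix ρ > 0. Then for all sequences (δ₁ₖ), (δ₂ₖ) of strictly positive reals with δ₁ₖ → 0 and δ₂ₖ/δ₁ₖ → 0 as k → ∞, one has lim_{k→∞} (δ₁ₖ/δ₂ₖ)^{(N-2)/2} · ∫_{{x ∈ ℝ^N : √(δ₁ₖδ₂ₖ) ≤ |x| ≤ ρ}} U_{δ₁ₖ}(x)^p · U_{δ₂ₖ}(x) dx = α_N^{2N/(N-2)} · ∫_{ℝ^N} |y|^{-(N-2)} · (1+|y|²)^{-(N+2)/2} dy. -/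

import Mathlib

open MeasureTheory Filter Set

/-- The standard bubble `U_δ(x) = α_N δ^((N-2)/2) / (δ² + |x|²)^((N-2)/2)`,
with `α_N = (N(N-2))^((N-2)/4)`. -/
noncomputable def bubble (N : ℕ) (δ : ℝ) (x : EuclideanSpace ℝ (Fin N)) : ℝ :=
  ((N : ℝ) * ((N : ℝ) - 2)) ^ (((N : ℝ) - 2) / 4) * δ ^ (((N : ℝ) - 2) / 2) /
    (δ ^ 2 + ‖x‖ ^ 2) ^ (((N : ℝ) - 2) / 2)

private lemma stmt19_intOn_rpow_norm_ball {N : ℕ} (hN : 0 < N) {r : ℝ} (hr0 : r < 0)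
    (hrN : -(N:ℝ) < r) :
    IntegrableOn (fun y : EuclideanSpace ℝ (Fin N) => ‖y‖ ^ r) (Metric.ball 0 1) := by
  haveI : Nonempty (Fin N) := ⟨⟨0, hN⟩⟩
  set E := EuclideanSpace ℝ (Fin N)
  set μ : Measure E := volume with hμ
  have hmeas : Measurable (fun y : E => ‖y‖ ^ r) := measurable_norm.pow_const r
  constructor
  · exact hmeas.aestronglyMeasurable
  · rw [hasFiniteIntegral_iff_norm]
    have hnn : ∀ y : E, 0 ≤ ‖y‖ ^ r := fun y => Real.rpow_nonneg (norm_nonneg _) _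
    have step1 : ∫⁻ a in Metric.ball (0:E) 1, ENNReal.ofReal ‖‖a‖ ^ r‖ ∂μ
        = ∫⁻ t in Ioi (0:ℝ), (μ.restrict (Metric.ball (0:E) 1)) {a | t < ‖a‖ ^ r} := by
      rw [← lintegral_eq_lintegral_meas_lt _ (ae_of_all _ hnn) hmeas.aemeasurable]
      refine lintegral_congr fun a => by rw [Real.norm_of_nonneg (hnn a)]
    rw [step1]
    set f := fun t : ℝ => (μ.restrict (Metric.ball (0:E) 1)) {a | t < ‖a‖ ^ r} with hf
    have hsub : ∀ t ∈ Ioi (1:ℝ), {a : E | t < ‖a‖ ^ r} ⊆ Metric.closedBall 0 (t ^ r⁻¹) := by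
      intro t ht a ha
      simp only [mem_setOf_eq] at ha
      have ht0 : (0:ℝ) < t := lt_trans zero_lt_one ht
      rcases eq_or_ne a 0 with rfl | h0
      · rw [norm_zero, Real.zero_rpow hr0.ne] at ha; exact absurd ha (not_lt.2 ht0.le)
      · have hna : 0 < ‖a‖ := norm_pos_iff.2 h0
        have h2 : (‖a‖ ^ r) ^ r⁻¹ < t ^ r⁻¹ :=
          Real.rpow_lt_rpow_of_neg ht0 ha (inv_lt_zero.2 hr0)
        rw [← Real.rpow_mul hna.le, mul_inv_cancel₀ hr0.ne, Real.rpow_one] at h2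
        exact mem_closedBall_zero_iff.2 h2.le
    have hB : μ (Metric.ball (0:E) 1) < ⊤ := measure_ball_lt_top
    have hle : ∀ t : ℝ, f t ≤ μ (Metric.ball (0:E) 1) := fun t => by
      rw [hf, ← Measure.restrict_apply_univ (μ := μ) (Metric.ball (0:E) 1)]
      exact measure_mono (subset_univ _)
    calc ∫⁻ t in Ioi (0:ℝ), f t
        ≤ ∫⁻ t in Ioc (0:ℝ) 1 ∪ Ioi 1, f t := lintegral_mono_set Ioi_subset_Ioc_union_Ioi
      _ ≤ (∫⁻ t in Ioc (0:ℝ) 1, f t) + ∫⁻ t in Ioi (1:ℝ), f t := lintegral_union_le _ _ _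
      _ < ⊤ := by
          refine ENNReal.add_lt_top.2 ⟨?_, ?_⟩
          · calc ∫⁻ t in Ioc (0:ℝ) 1, f t ≤ ∫⁻ _ in Ioc (0:ℝ) 1, μ (Metric.ball (0:E) 1) :=
                  lintegral_mono fun t => hle t
              _ = μ (Metric.ball (0:E) 1) * volume (Ioc (0:ℝ) 1) := by
                  rw [setLIntegral_const]
              _ < ⊤ := ENNReal.mul_lt_top hB (by simp)
          · have hval : ∀ t ∈ Ioi (1:ℝ),
                f t ≤ ENNReal.ofReal (t ^ ((N:ℝ) * r⁻¹)) * μ (Metric.ball (0:E) 1) := by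
              intro t ht
              have ht0 : (0:ℝ) < t := lt_trans zero_lt_one ht
              have hle2 : f t ≤ μ (Metric.closedBall (0:E) (t ^ r⁻¹)) :=
                le_trans (measure_mono (hsub t ht)) (Measure.restrict_apply_le _ _)
              refine hle2.trans ?_
              rw [Measure.addHaar_closedBall _ _ (Real.rpow_nonneg ht0.le _)]
              have hdim : Module.finrank ℝ E = N := finrank_euclideanSpace_fin
              rw [hdim]
              have : ((t : ℝ) ^ r⁻¹) ^ N = t ^ ((N:ℝ) * r⁻¹) := by
                rw [← Real.rpow_natCast (t ^ r⁻¹) N, ← Real.rpow_mul ht0.le, mul_comm]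
              rw [this]
            have hint : IntegrableOn (fun t : ℝ => t ^ ((N:ℝ) * r⁻¹)) (Ioi (1:ℝ)) := by
              apply integrableOn_Ioi_rpow_of_lt _ zero_lt_one
              rw [← div_eq_mul_inv, div_lt_iff_of_neg hr0]
              linarith
            calc ∫⁻ t in Ioi (1:ℝ), f t
                ≤ ∫⁻ t in Ioi (1:ℝ), ENNReal.ofReal (t ^ ((N:ℝ) * r⁻¹)) * μ (Metric.ball (0:E) 1) :=
                  setLIntegral_mono' measurableSet_Ioi hval
              _ = (∫⁻ t in Ioi (1:ℝ), ENNReal.ofReal (t ^ ((N:ℝ) * r⁻¹))) * μ (Metric.ball (0:E) 1) := by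
                  rw [lintegral_mul_const' _ _ hB.ne]
              _ < ⊤ := by
                  refine ENNReal.mul_lt_top ?_ hB
                  have hfi := hint.hasFiniteIntegral
                  rw [hasFiniteIntegral_iff_norm] at hfi
                  refine lt_of_le_of_lt (le_of_eq ?_) hfi
                  refine setLIntegral_congr_fun measurableSet_Ioi (fun t ht => ?_)
                  rw [Real.norm_of_nonneg (Real.rpow_nonneg (le_trans zero_le_one (le_of_lt ht)) _)]

private lemma stmt19_integrable_bound {N : ℕ} (hN : 7 ≤ N) :
    Integrable (fun y : EuclideanSpace ℝ (Fin N) =>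
      ‖y‖ ^ (-((N : ℝ) - 2)) * (1 + ‖y‖ ^ 2) ^ (-(((N : ℝ) + 2) / 2))) := by
  haveI : Nonempty (Fin N) := ⟨⟨0, by omega⟩⟩
  set E := EuclideanSpace ℝ (Fin N)
  have hN7 : (7:ℝ) ≤ (N:ℝ) := by exact_mod_cast hN
  set q : E → ℝ := fun y => ‖y‖ ^ (-((N : ℝ) - 2)) * (1 + ‖y‖ ^ 2) ^ (-(((N : ℝ) + 2) / 2))
    with hq
  have hqmeas : AEStronglyMeasurable q volume := by
    refine Measurable.aestronglyMeasurable ?_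
    exact (measurable_norm.pow_const _).mul
      (((measurable_norm.pow_const 2).const_add 1).pow_const _)
  have hqnn : ∀ y : E, 0 ≤ q y := fun y =>
    mul_nonneg (Real.rpow_nonneg (norm_nonneg _) _) (Real.rpow_nonneg (by positivity) _)
  rw [← integrableOn_univ, ← union_compl_self (Metric.ball (0:E) 1)]
  refine IntegrableOn.union ?_ ?_
  · -- near zero: dominate by `‖y‖^(-(N-2))`
    refine Integrable.mono' (stmt19_intOn_rpow_norm_ball (N := N)
      (r := -((N:ℝ)-2)) (by omega) (by linarith) (by linarith))
      (hqmeas.restrict) (ae_of_all _ fun y => ?_)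
    rw [Real.norm_of_nonneg (hqnn y)]
    calc q y ≤ ‖y‖ ^ (-((N : ℝ) - 2)) * 1 := by
          refine mul_le_mul_of_nonneg_left ?_ (Real.rpow_nonneg (norm_nonneg _) _)
          exact Real.rpow_le_one_of_one_le_of_nonpos
            (le_add_of_nonneg_right (sq_nonneg ‖y‖)) (by linarith)
      _ = ‖y‖ ^ (-((N : ℝ) - 2)) := mul_one _
  · -- away from zero: dominate by `(1+‖y‖²)^(-(N+2)/2)`
    have hint : Integrable (fun y : E => ((1:ℝ) + ‖y‖ ^ 2) ^ (-((N:ℝ)+2) / 2)) := by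
      apply integrable_rpow_neg_one_add_norm_sq
      rw [finrank_euclideanSpace_fin]
      linarith
    refine Integrable.mono' hint.restrict (hqmeas.restrict) ?_
    rw [ae_restrict_iff' (measurableSet_ball).compl]
    refine ae_of_all _ fun y hy => ?_
    have hy1 : 1 ≤ ‖y‖ := by
      simpa [Metric.mem_ball, not_lt] using hy
    rw [Real.norm_of_nonneg (hqnn y)]
    calc q y ≤ 1 * (1 + ‖y‖ ^ 2) ^ (-(((N : ℝ) + 2) / 2)) := by
          refine mul_le_mul_of_nonneg_right ?_ (Real.rpow_nonneg (by positivity) _)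
          exact Real.rpow_le_one_of_one_le_of_nonpos hy1 (by linarith)
      _ = (1 + ‖y‖ ^ 2) ^ (-(((N : ℝ) + 2) / 2)) := one_mul _
      _ = (1 + ‖y‖ ^ 2) ^ (-((N:ℝ)+2) / 2) := by rw [neg_div]

private lemma stmt19_alg (N : ℕ) (hN : 7 ≤ N) {d1 d2 s : ℝ} (h1 : 0 < d1) (h2 : 0 < d2)
    (hs : 0 ≤ s) :
    (d1/d2) ^ (((N:ℝ)-2)/2) * d1^(N:ℕ) *
      ((((N : ℝ) * ((N : ℝ) - 2)) ^ (((N : ℝ) - 2) / 4) * d1 ^ (((N : ℝ) - 2) / 2) /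
        (d1 ^ 2 + d1^2*s) ^ (((N : ℝ) - 2) / 2)) ^ (((N:ℝ)+2)/((N:ℝ)-2)) *
       (((N : ℝ) * ((N : ℝ) - 2)) ^ (((N : ℝ) - 2) / 4) * d2 ^ (((N : ℝ) - 2) / 2) /
        (d2 ^ 2 + d1^2*s) ^ (((N : ℝ) - 2) / 2)))
    = (((N : ℝ) * ((N : ℝ) - 2)) ^ (((N : ℝ) - 2) / 4)) ^ (2*(N:ℝ)/((N:ℝ)-2)) *
      ((1+s) ^ (-(((N:ℝ)+2)/2)) * ((d2/d1)^2+s) ^ (-(((N:ℝ)-2)/2))) := by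
  have hN7 : (7:ℝ) ≤ (N:ℝ) := by exact_mod_cast hN
  set m : ℝ := ((N:ℝ)-2)/2 with hm
  set c : ℝ := ((N : ℝ) * ((N : ℝ) - 2)) ^ (((N : ℝ) - 2) / 4) with hcdef
  set p : ℝ := ((N:ℝ)+2)/((N:ℝ)-2) with hp
  have hN2 : (0:ℝ) < (N:ℝ) - 2 := by linarith
  have hc : 0 < c := Real.rpow_pos_of_pos (by positivity) _
  have h1s : (0:ℝ) < 1 + s := by linarith
  have hes : (0:ℝ) < (d2/d1)^2 + s := by positivity
  have hA : d1 ^ 2 + d1^2*s = d1^2 * (1+s) := by ring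
  have hB : d2 ^ 2 + d1^2*s = d1^2 * ((d2/d1)^2+s) := by field_simp
  rw [hA, hB]
  have hsq : ∀ x : ℝ, 0 < x → ∀ u : ℝ, 0 ≤ u → (x^2*u) ^ m = (x^m * x^m) * u^m := by
    intro x hx u hu
    have hxx : (x^2:ℝ) ^ m = x^m * x^m := by
      rw [← Real.rpow_natCast x 2, ← Real.rpow_mul hx.le,
        show ((2:ℕ):ℝ)*m = m + m by push_cast; ring, Real.rpow_add hx]
    rw [Real.mul_rpow (by positivity) hu, hxx]
  rw [hsq d1 h1 _ h1s.le, hsq d1 h1 _ hes.le]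
  have hd1m : (0:ℝ) < d1 ^ m := Real.rpow_pos_of_pos h1 m
  have hd2m : (0:ℝ) < d2 ^ m := Real.rpow_pos_of_pos h2 m
  have h1sm : (0:ℝ) < (1+s) ^ m := Real.rpow_pos_of_pos h1s m
  have hesm : (0:ℝ) < ((d2/d1)^2+s) ^ m := Real.rpow_pos_of_pos hes m
  have e0 : c * d1 ^ m / (d1^m * d1^m * (1+s)^m) = c / (d1^m * (1+s)^m) := by
    field_simp
  rw [e0]
  have e1 : (c / (d1^m * (1+s)^m)) ^ p = c^p / (d1^(m*p) * (1+s)^(m*p)) := by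
    rw [Real.div_rpow hc.le (by positivity), Real.mul_rpow hd1m.le h1sm.le,
      ← Real.rpow_mul h1.le, ← Real.rpow_mul h1s.le]
  rw [e1]
  rw [Real.div_rpow h1.le h2.le, ← Real.rpow_natCast d1 N]
  have e2 : (2*(N:ℝ)/((N:ℝ)-2)) = p + 1 := by rw [hp]; field_simp; ring
  rw [e2, Real.rpow_add hc, Real.rpow_one,
    Real.rpow_neg h1s.le, Real.rpow_neg hes.le]
  have hmp : m * p = ((N:ℝ)+2)/2 := by rw [hm, hp]; field_simp
  rw [← hmp]
  have hmerge : d1^((N:ℝ)) * d1^m = d1^(m*p) * (d1^m * d1^m) := by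
    rw [← Real.rpow_add h1, ← Real.rpow_add h1, ← Real.rpow_add h1]
    congr 1
    rw [hm, hp]; field_simp; ring
  calc d1^m/d2^m * d1^((N:ℝ)) *
        (c^p / (d1^(m*p) * (1+s)^(m*p)) * (c * d2^m / (d1^m * d1^m * (((d2/d1)^2+s)^m))))
      = (c^p * c) * ((d1^((N:ℝ)) * d1^m) / (d1^(m*p) * (d1^m * d1^m))) * (d2^m / d2^m) *
          (((1+s)^(m*p))⁻¹ * ((((d2/d1)^2+s)^m))⁻¹) := by
        field_simp
    _ = c^p * c * (((1+s)^(m*p))⁻¹ * ((((d2/d1)^2+s)^m))⁻¹) := by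
        rw [hmerge, div_self (by positivity), div_self hd2m.ne']
        ring

private lemma stmt19_key (N : ℕ) (hN : 7 ≤ N) {ρ d1 d2 : ℝ} (h1 : 0 < d1) (h2 : 0 < d2)
    (y : EuclideanSpace ℝ (Fin N)) :
    (d1/d2) ^ (((N:ℝ)-2)/2) * d1^(N:ℕ) *
      Set.indicator {x : EuclideanSpace ℝ (Fin N) | Real.sqrt (d1*d2) ≤ ‖x‖ ∧ ‖x‖ ≤ ρ}
        (fun x => bubble N d1 x ^ (((N:ℝ)+2)/((N:ℝ)-2)) * bubble N d2 x) (d1 • y)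
    = Set.indicator {z : EuclideanSpace ℝ (Fin N) | Real.sqrt (d2/d1) ≤ ‖z‖ ∧ ‖z‖ ≤ ρ/d1}
        (fun z => (((N : ℝ) * ((N : ℝ) - 2)) ^ (((N : ℝ) - 2) / 4)) ^ (2*(N:ℝ)/((N:ℝ)-2)) *
          ((1+‖z‖^2) ^ (-(((N:ℝ)+2)/2)) * ((d2/d1)^2+‖z‖^2) ^ (-(((N:ℝ)-2)/2)))) y := by
  have hnorm : ‖d1 • y‖ = d1 * ‖y‖ := by
    rw [norm_smul, Real.norm_eq_abs, abs_of_pos h1]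
  have hsqrt : Real.sqrt (d1*d2) = d1 * Real.sqrt (d2/d1) := by
    rw [show d1*d2 = d1^2*(d2/d1) by field_simp, Real.sqrt_mul (by positivity),
      Real.sqrt_sq h1.le]
  have hmem : (d1 • y ∈ {x : EuclideanSpace ℝ (Fin N) | Real.sqrt (d1*d2) ≤ ‖x‖ ∧ ‖x‖ ≤ ρ}) ↔
      (y ∈ {z : EuclideanSpace ℝ (Fin N) | Real.sqrt (d2/d1) ≤ ‖z‖ ∧ ‖z‖ ≤ ρ/d1}) := by
    simp only [mem_setOf_eq, hnorm, hsqrt]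
    rw [mul_le_mul_iff_right₀ h1, le_div_iff₀' h1]
  by_cases hy : y ∈ {z : EuclideanSpace ℝ (Fin N) | Real.sqrt (d2/d1) ≤ ‖z‖ ∧ ‖z‖ ≤ ρ/d1}
  · rw [Set.indicator_of_mem (hmem.2 hy), Set.indicator_of_mem hy]
    have hb : ‖d1 • y‖ ^ 2 = d1 ^ 2 * ‖y‖ ^ 2 := by rw [hnorm, mul_pow]
    simp only [bubble, hb]
    exact stmt19_alg N hN h1 h2 (sq_nonneg ‖y‖)
  · rw [Set.indicator_of_notMem (fun h => hy (hmem.1 h)), Set.indicator_of_notMem hy,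
      mul_zero]

theorem stmt_19 (N : ℕ) (hN : 7 ≤ N) (ρ : ℝ) (hρ : 0 < ρ)
    (δ₁ δ₂ : ℕ → ℝ) (hδ₁ : ∀ k, 0 < δ₁ k) (hδ₂ : ∀ k, 0 < δ₂ k)
    (h₁ : Tendsto δ₁ atTop (nhds 0))
    (h₂ : Tendsto (fun k => δ₂ k / δ₁ k) atTop (nhds 0)) :
    Tendsto
      (fun k =>
        (δ₁ k / δ₂ k) ^ (((N : ℝ) - 2) / 2) *
          ∫ x in {x : EuclideanSpace ℝ (Fin N) |
              Real.sqrt (δ₁ k * δ₂ k) ≤ ‖x‖ ∧ ‖x‖ ≤ ρ},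
            (bubble N (δ₁ k) x) ^ (((N : ℝ) + 2) / ((N : ℝ) - 2)) *
              bubble N (δ₂ k) x)
      atTop
      (nhds ((((N : ℝ) * ((N : ℝ) - 2)) ^ (((N : ℝ) - 2) / 4)) ^
          (2 * (N : ℝ) / ((N : ℝ) - 2)) *
        ∫ y : EuclideanSpace ℝ (Fin N),
          ‖y‖ ^ (-((N : ℝ) - 2)) * (1 + ‖y‖ ^ 2) ^ (-(((N : ℝ) + 2) / 2)))) := by
  classical
  haveI : Nonempty (Fin N) := ⟨⟨0, by omega⟩⟩
  have hN7 : (7:ℝ) ≤ (N:ℝ) := by exact_mod_cast hN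
  have hN2 : (0:ℝ) < (N:ℝ) - 2 := by linarith
  have hc : (0:ℝ) < ((N : ℝ) * ((N : ℝ) - 2)) ^ (((N : ℝ) - 2) / 4) :=
    Real.rpow_pos_of_pos (by positivity) _
  have hcP : (0:ℝ) < (((N : ℝ) * ((N : ℝ) - 2)) ^ (((N : ℝ) - 2) / 4)) ^
      (2 * (N : ℝ) / ((N : ℝ) - 2)) := Real.rpow_pos_of_pos hc _
  -- the rescaled integrands
  set f : ℕ → EuclideanSpace ℝ (Fin N) → ℝ := fun k =>
    Set.indicator {z : EuclideanSpace ℝ (Fin N) |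
        Real.sqrt (δ₂ k / δ₁ k) ≤ ‖z‖ ∧ ‖z‖ ≤ ρ / δ₁ k}
      (fun z => (((N : ℝ) * ((N : ℝ) - 2)) ^ (((N : ℝ) - 2) / 4)) ^
          (2 * (N : ℝ) / ((N : ℝ) - 2)) *
        ((1+‖z‖^2) ^ (-(((N:ℝ)+2)/2)) *
          ((δ₂ k/δ₁ k)^2+‖z‖^2) ^ (-(((N:ℝ)-2)/2)))) with hfdef
  set bound : EuclideanSpace ℝ (Fin N) → ℝ := fun y =>
    (((N : ℝ) * ((N : ℝ) - 2)) ^ (((N : ℝ) - 2) / 4)) ^ (2 * (N : ℝ) / ((N : ℝ) - 2)) *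
      (‖y‖ ^ (-((N : ℝ) - 2)) * (1 + ‖y‖ ^ 2) ^ (-(((N : ℝ) + 2) / 2))) with hbdef
  -- Step A : rewrite each term of the sequence as `∫ f k`
  have stepA : ∀ k,
      (δ₁ k / δ₂ k) ^ (((N : ℝ) - 2) / 2) *
        ∫ x in {x : EuclideanSpace ℝ (Fin N) |
            Real.sqrt (δ₁ k * δ₂ k) ≤ ‖x‖ ∧ ‖x‖ ≤ ρ},
          (bubble N (δ₁ k) x) ^ (((N : ℝ) + 2) / ((N : ℝ) - 2)) *
            bubble N (δ₂ k) x
      = ∫ y, f k y := by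
    intro k
    have hSm : MeasurableSet {x : EuclideanSpace ℝ (Fin N) |
        Real.sqrt (δ₁ k * δ₂ k) ≤ ‖x‖ ∧ ‖x‖ ≤ ρ} := by
      rw [Set.setOf_and]
      exact (measurableSet_le measurable_const measurable_norm).inter
        (measurableSet_le measurable_norm measurable_const)
    set g : EuclideanSpace ℝ (Fin N) → ℝ := fun x =>
      (bubble N (δ₁ k) x) ^ (((N : ℝ) + 2) / ((N : ℝ) - 2)) * bubble N (δ₂ k) x with hg
    have h1' : (0:ℝ) < (δ₁ k)^N := pow_pos (hδ₁ k) N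
    have hcomp := MeasureTheory.Measure.integral_comp_smul (volume : Measure (EuclideanSpace ℝ (Fin N)))
      (Set.indicator {x : EuclideanSpace ℝ (Fin N) |
        Real.sqrt (δ₁ k * δ₂ k) ≤ ‖x‖ ∧ ‖x‖ ≤ ρ} g) (δ₁ k)
    rw [finrank_euclideanSpace_fin, abs_of_pos (inv_pos.2 h1'), smul_eq_mul] at hcomp
    have hflip : ∫ x, Set.indicator {x : EuclideanSpace ℝ (Fin N) |
        Real.sqrt (δ₁ k * δ₂ k) ≤ ‖x‖ ∧ ‖x‖ ≤ ρ} g x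
        = (δ₁ k)^N * ∫ y, Set.indicator {x : EuclideanSpace ℝ (Fin N) |
        Real.sqrt (δ₁ k * δ₂ k) ≤ ‖x‖ ∧ ‖x‖ ≤ ρ} g (δ₁ k • y) := by
      rw [hcomp]; field_simp
    calc (δ₁ k / δ₂ k) ^ (((N : ℝ) - 2) / 2) * ∫ x in {x : EuclideanSpace ℝ (Fin N) |
            Real.sqrt (δ₁ k * δ₂ k) ≤ ‖x‖ ∧ ‖x‖ ≤ ρ}, g x
        = (δ₁ k / δ₂ k) ^ (((N : ℝ) - 2) / 2) * ((δ₁ k)^N *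
            ∫ y, Set.indicator {x : EuclideanSpace ℝ (Fin N) |
              Real.sqrt (δ₁ k * δ₂ k) ≤ ‖x‖ ∧ ‖x‖ ≤ ρ} g (δ₁ k • y)) := by
          rw [← integral_indicator hSm, hflip]
      _ = ∫ y, (δ₁ k / δ₂ k) ^ (((N : ℝ) - 2) / 2) * ((δ₁ k)^N *
            Set.indicator {x : EuclideanSpace ℝ (Fin N) |
              Real.sqrt (δ₁ k * δ₂ k) ≤ ‖x‖ ∧ ‖x‖ ≤ ρ} g (δ₁ k • y)) := by
          rw [integral_const_mul, integral_const_mul]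
      _ = ∫ y, f k y := by
          refine integral_congr_ae (ae_of_all _ fun y => ?_)
          simp only [hfdef, hg]
          rw [← mul_assoc]
          exact stmt19_key N hN (hδ₁ k) (hδ₂ k) y
  refine Tendsto.congr (fun k => (stepA k).symm) ?_
  have htarget : (((N : ℝ) * ((N : ℝ) - 2)) ^ (((N : ℝ) - 2) / 4)) ^
        (2 * (N : ℝ) / ((N : ℝ) - 2)) *
      ∫ y : EuclideanSpace ℝ (Fin N),
        ‖y‖ ^ (-((N : ℝ) - 2)) * (1 + ‖y‖ ^ 2) ^ (-(((N : ℝ) + 2) / 2))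
      = ∫ y, bound y := (integral_const_mul _ _).symm
  rw [htarget]
  -- dominated convergence
  have hfmeas : ∀ k, AEStronglyMeasurable (f k) volume := by
    intro k
    refine (Measurable.indicator ?_ ?_).aestronglyMeasurable
    · exact measurable_const.mul
        ((((measurable_norm.pow_const 2).const_add 1).pow_const _).mul
          (((measurable_norm.pow_const 2).const_add ((δ₂ k/δ₁ k)^2)).pow_const _))
    · rw [Set.setOf_and]
      exact (measurableSet_le measurable_const measurable_norm).inter
        (measurableSet_le measurable_norm measurable_const)
  have hboundint : Integrable bound volume :=
    (stmt19_integrable_bound hN).const_mul _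
  have hrpow2 : ∀ y : EuclideanSpace ℝ (Fin N),
      (‖y‖^2 : ℝ) ^ (-(((N:ℝ)-2)/2)) = ‖y‖ ^ (-((N:ℝ)-2)) := by
    intro y
    rw [← Real.rpow_natCast ‖y‖ 2, ← Real.rpow_mul (norm_nonneg y)]
    congr 1
    push_cast; ring
  have hbound : ∀ k, ∀ᵐ y : EuclideanSpace ℝ (Fin N) ∂volume, ‖f k y‖ ≤ bound y := by
    intro k
    refine ae_of_all _ fun y => ?_
    by_cases hy : y ∈ {z : EuclideanSpace ℝ (Fin N) |
        Real.sqrt (δ₂ k / δ₁ k) ≤ ‖z‖ ∧ ‖z‖ ≤ ρ / δ₁ k}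
    · simp only [hfdef]
      rw [Set.indicator_of_mem hy]
      have hny : 0 < ‖y‖ := lt_of_lt_of_le
        (Real.sqrt_pos.2 (div_pos (hδ₂ k) (hδ₁ k))) hy.1
      have hBB : ((δ₂ k/δ₁ k)^2+‖y‖^2) ^ (-(((N:ℝ)-2)/2)) ≤ (‖y‖^2) ^ (-(((N:ℝ)-2)/2)) :=
        Real.rpow_le_rpow_of_nonpos (by positivity)
          (le_add_of_nonneg_left (sq_nonneg _)) (by linarith)
      rw [hrpow2 y] at hBB
      rw [Real.norm_eq_abs, abs_of_nonneg (by positivity)]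
      have hfinal : bound y = (((N : ℝ) * ((N : ℝ) - 2)) ^ (((N : ℝ) - 2) / 4)) ^
          (2 * (N : ℝ) / ((N : ℝ) - 2)) *
          ((1 + ‖y‖ ^ 2) ^ (-(((N : ℝ) + 2) / 2)) * ‖y‖ ^ (-((N : ℝ) - 2))) := by
        simp only [hbdef]; ring
      rw [hfinal]
      exact mul_le_mul_of_nonneg_left
        (mul_le_mul_of_nonneg_left hBB (Real.rpow_nonneg (by positivity) _)) hcP.le
    · simp only [hfdef]
      rw [Set.indicator_of_notMem hy, norm_zero]
      simp only [hbdef]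
      positivity
  have hlim : ∀ᵐ y : EuclideanSpace ℝ (Fin N) ∂volume,
      Tendsto (fun k => f k y) atTop (nhds (bound y)) := by
    have h0 : ∀ᵐ y : EuclideanSpace ℝ (Fin N) ∂volume, y ≠ 0 := by
      have hset : {a : EuclideanSpace ℝ (Fin N) | ¬ a ≠ 0} = {0} := by ext a; simp
      rw [ae_iff, hset]
      exact measure_singleton 0
    filter_upwards [h0] with y hy0
    have hny : 0 < ‖y‖ := norm_pos_iff.2 hy0
    -- eventually the indicator is active
    have hsq0 : Tendsto (fun k => Real.sqrt (δ₂ k / δ₁ k)) atTop (nhds 0) := by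
      have := (Real.continuous_sqrt.tendsto 0).comp h₂
      simpa [Real.sqrt_zero, Function.comp_def] using this
    have hev1 : ∀ᶠ k in atTop, Real.sqrt (δ₂ k / δ₁ k) ≤ ‖y‖ :=
      (hsq0.eventually_lt_const hny).mono fun k hk => hk.le
    have hev2 : ∀ᶠ k in atTop, ‖y‖ ≤ ρ / δ₁ k := by
      have h1' : Tendsto δ₁ atTop (nhdsWithin 0 (Set.Ioi 0)) :=
        tendsto_nhdsWithin_iff.2 ⟨h₁, Eventually.of_forall fun k => hδ₁ k⟩
      have hinv : Tendsto (fun k => (δ₁ k)⁻¹) atTop atTop :=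
        tendsto_inv_nhdsGT_zero.comp h1'
      have hdiv : Tendsto (fun k => ρ / δ₁ k) atTop atTop := by
        simpa [div_eq_mul_inv] using hinv.const_mul_atTop hρ
      exact hdiv.eventually_ge_atTop ‖y‖
    -- convergence of the values
    have h2' : Tendsto (fun k => (δ₂ k/δ₁ k)^2 + ‖y‖^2) atTop (nhds (‖y‖^2)) := by
      have := (h₂.pow 2).add (tendsto_const_nhds (x := ‖y‖^2))
      simpa using this
    have hcont : ContinuousAt (fun t : ℝ => t ^ (-(((N:ℝ)-2)/2))) (‖y‖^2) :=
      Real.continuousAt_rpow_const _ _ (Or.inl (by positivity))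
    have hval : Tendsto (fun k =>
        (((N : ℝ) * ((N : ℝ) - 2)) ^ (((N : ℝ) - 2) / 4)) ^ (2 * (N : ℝ) / ((N : ℝ) - 2)) *
          ((1+‖y‖^2) ^ (-(((N:ℝ)+2)/2)) *
            ((δ₂ k/δ₁ k)^2+‖y‖^2) ^ (-(((N:ℝ)-2)/2)))) atTop (nhds (bound y)) := by
      have hin : Tendsto (fun k => ((δ₂ k/δ₁ k)^2+‖y‖^2) ^ (-(((N:ℝ)-2)/2))) atTop
          (nhds ((‖y‖^2) ^ (-(((N:ℝ)-2)/2)))) := hcont.tendsto.comp h2'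
      have := ((hin.const_mul ((1+‖y‖^2) ^ (-(((N:ℝ)+2)/2)))).const_mul
        ((((N : ℝ) * ((N : ℝ) - 2)) ^ (((N : ℝ) - 2) / 4)) ^ (2 * (N : ℝ) / ((N : ℝ) - 2))))
      convert this using 2
      rw [hrpow2 y]
      simp only [hbdef]
      ring
    refine hval.congr' ?_
    filter_upwards [hev1, hev2] with k hk1 hk2
    simp only [hfdef]
    rw [Set.indicator_of_mem (show y ∈ {z : EuclideanSpace ℝ (Fin N) |
      Real.sqrt (δ₂ k / δ₁ k) ≤ ‖z‖ ∧ ‖z‖ ≤ ρ / δ₁ k} from ⟨hk1, hk2⟩)]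
  exact tendsto_integral_of_dominated_convergence bound hfmeas hboundint hbound hlim
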